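/- Let G be a countable group admitting a Fřlner sequence (F_n), i.e. a sequence of nonempty finite subsets of G with |F_n Δ gF_n| / |F_n| → 0 for every g ∈ G. Then G admits a left-invariant finitely additive probability measure: there exists a function ν : Set(G) → ℝ such that ν(B) ∈ [0,1] for every B ⊆ G, ν(∅) = 0, ν(G) = 1, ν(B ∪ C) = ν(B) + ν(C) whenever B and C are disjoint subsets of G, and ν(gB) = ν(B) for every g ∈ G and every B ⊆ G. -/

import Mathlib

open Filter Pointwise

theorem stmt_6 {G : Type*} [Group G] [Countable G] [DecidableEq G]
    (F : ℕ → Finset G) (hF : ∀ n, (F n).Nonempty)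
    (hFolner : ∀ g : G,
      Tendsto (fun n => ((symmDiff (F n) (g • F n)).card : ℝ) / (F n).card) atTop (nhds 0)) :
    ∃ ν : Set G → ℝ,
      (∀ B : Set G, 0 ≤ ν B ∧ ν B ≤ 1) ∧ ν ∅ = 0 ∧ ν Set.univ = 1 ∧
      (∀ B C : Set G, Disjoint B C → ν (B ∪ C) = ν B + ν C) ∧
      (∀ (g : G) (B : Set G), ν (g • B) = ν B) := by
  classical
  set U : Ultrafilter ℕ := Ultrafilter.of atTop with hUdef
  have hUle : (U : Filter ℕ) ≤ atTop := Ultrafilter.of_le atTop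
  set f : Set G → ℕ → ℝ :=
    fun B n => (((F n).filter (· ∈ B)).card : ℝ) / (F n).card with hfdef
  have hcardpos : ∀ n, (0:ℝ) < (F n).card := fun n => by
    exact_mod_cast Finset.card_pos.2 (hF n)
  have hmem : ∀ B n, f B n ∈ Set.Icc (0:ℝ) 1 := by
    intro B n
    constructor
    · exact div_nonneg (by positivity) (le_of_lt (hcardpos n))
    · rw [div_le_one (hcardpos n)]
      exact_mod_cast Finset.card_le_card (Finset.filter_subset _ _)
  have key : ∀ B : Set G, ∃ l, l ∈ Set.Icc (0:ℝ) 1 ∧ Tendsto (f B) (U : Filter ℕ) (nhds l) := by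
    intro B
    have hc : IsCompact (Set.Icc (0:ℝ) 1) := isCompact_Icc
    have hle : (Ultrafilter.map (f B) U : Filter ℝ) ≤ Filter.principal (Set.Icc 0 1) := by
      rw [Ultrafilter.coe_map]
      refine Filter.le_principal_iff.mpr ?_
      exact Filter.mem_map.mpr (Filter.univ_mem' (fun n => hmem B n))
    obtain ⟨l, hl, hl2⟩ := hc.ultrafilter_le_nhds (Ultrafilter.map (f B) U) hle
    exact ⟨l, hl, hl2⟩
  choose ν hνmem hνtend using key
  refine ⟨ν, fun B => ⟨(hνmem B).1, (hνmem B).2⟩, ?_, ?_, ?_, ?_⟩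
  · -- ν ∅ = 0
    have : f ∅ = fun _ => (0:ℝ) := by
      funext n; simp [hfdef]
    have h0 : Tendsto (f ∅) (U : Filter ℕ) (nhds 0) := by
      rw [this]; exact tendsto_const_nhds
    exact tendsto_nhds_unique (hνtend ∅) h0
  · -- ν univ = 1
    have : f Set.univ = fun _ => (1:ℝ) := by
      funext n
      simp only [hfdef, Set.mem_univ, Finset.filter_true_of_mem (fun _ _ => trivial)]
      exact div_self (ne_of_gt (hcardpos n))
    have h1 : Tendsto (f Set.univ) (U : Filter ℕ) (nhds 1) := by
      rw [this]; exact tendsto_const_nhds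
    exact tendsto_nhds_unique (hνtend Set.univ) h1
  · -- additivity
    intro B C hBC
    have hadd : f (B ∪ C) = fun n => f B n + f C n := by
      funext n
      have hdisj : Disjoint ((F n).filter (· ∈ B)) ((F n).filter (· ∈ C)) := by
        rw [Finset.disjoint_left]
        intro x hx hy
        rw [Finset.mem_filter] at hx hy
        exact Set.disjoint_left.mp hBC hx.2 hy.2
      have hunion : (F n).filter (· ∈ B ∪ C) =
          (F n).filter (· ∈ B) ∪ (F n).filter (· ∈ C) := by
        ext x; simp [Set.mem_union, and_or_left]
      have hcard : ((F n).filter (· ∈ B ∪ C)).card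
          = ((F n).filter (· ∈ B)).card + ((F n).filter (· ∈ C)).card := by
        rw [hunion, Finset.card_union_of_disjoint hdisj]
      simp only [hfdef]
      rw [← add_div]
      congr 1
      norm_cast
      convert hcard using 3

    have h2 : Tendsto (f (B ∪ C)) (U : Filter ℕ) (nhds (ν B + ν C)) := by
      rw [hadd]; exact (hνtend B).add (hνtend C)
    exact tendsto_nhds_unique (hνtend (B ∪ C)) h2
  · -- invariance
    intro g B
    -- counting identity
    have hcount : ∀ n, ((F n).filter (· ∈ g • B)).card
        = ((g⁻¹ • F n).filter (· ∈ B)).card := by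
      intro n
      have heq : (g⁻¹ • F n).filter (· ∈ B) = g⁻¹ • ((F n).filter (· ∈ g • B)) := by
        ext x
        simp only [Finset.mem_filter, Finset.mem_inv_smul_finset_iff,
          Set.mem_smul_set_iff_inv_smul_mem, smul_eq_mul, inv_inv, inv_mul_cancel_left]
      rw [heq, Finset.card_smul_finset]
    -- bound: |card(A.filter p) - card(A'.filter p)| ≤ card (A ∆ A')
    have hbound : ∀ n, |f (g • B) n - f B n|
        ≤ ((symmDiff (F n) (g⁻¹ • F n)).card : ℝ) / (F n).card := by
      intro n
      set A := F n
      set A' := g⁻¹ • F n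
      have hsub1 : A.filter (· ∈ B) ⊆ A'.filter (· ∈ B) ∪ (symmDiff A A') := by
        intro x hx
        rw [Finset.mem_filter] at hx
        by_cases hxA' : x ∈ A'
        · exact Finset.mem_union_left _ (Finset.mem_filter.mpr ⟨hxA', hx.2⟩)
        · exact Finset.mem_union_right _ (by
            rw [Finset.mem_symmDiff]; exact Or.inl ⟨hx.1, hxA'⟩)
      have hsub2 : A'.filter (· ∈ B) ⊆ A.filter (· ∈ B) ∪ (symmDiff A A') := by
        intro x hx
        rw [Finset.mem_filter] at hx
        by_cases hxA : x ∈ A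
        · exact Finset.mem_union_left _ (Finset.mem_filter.mpr ⟨hxA, hx.2⟩)
        · exact Finset.mem_union_right _ (by
            rw [Finset.mem_symmDiff]; exact Or.inr ⟨hx.1, hxA⟩)
      have h1 : ((A.filter (· ∈ B)).card : ℝ)
          ≤ (A'.filter (· ∈ B)).card + (symmDiff A A').card := by
        have := Finset.card_le_card hsub1
        have := this.trans (Finset.card_union_le _ _)
        exact_mod_cast this
      have h2 : ((A'.filter (· ∈ B)).card : ℝ)
          ≤ (A.filter (· ∈ B)).card + (symmDiff A A').card := by
        have := Finset.card_le_card hsub2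
        have := this.trans (Finset.card_union_le _ _)
        exact_mod_cast this
      have habs : |((A'.filter (· ∈ B)).card : ℝ) - (A.filter (· ∈ B)).card|
          ≤ (symmDiff A A').card := by
        rw [abs_sub_le_iff]; constructor <;> linarith
      have : f (g • B) n - f B n
          = (((A'.filter (· ∈ B)).card : ℝ) - (A.filter (· ∈ B)).card) / A.card := by
        simp only [hfdef, hcount n]
        ring
      rw [this, abs_div, abs_of_pos (hcardpos n)]
      gcongr
    have hdiff : Tendsto (fun n => f (g • B) n - f B n) atTop (nhds 0) :=
      squeeze_zero_norm hbound (hFolner g⁻¹)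
    have hdiffU : Tendsto (fun n => f (g • B) n - f B n) (U : Filter ℕ) (nhds 0) :=
      hdiff.mono_left hUle
    have h3 : Tendsto (f (g • B)) (U : Filter ℕ) (nhds (ν B + 0)) := by
      have : f (g • B) = fun n => f B n + (f (g • B) n - f B n) := by
        funext n; ring
      rw [this]; exact (hνtend B).add hdiffU
    have := tendsto_nhds_unique (hνtend (g • B)) h3
    simpa using this
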